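/- Define g(x,y) = e^{ik|x−y|}/(4π|x−y|) for x ≠ y in ℝ³, with k ≥ 0. If |t − x| ≤ a and |x − y| ≥ d with d > 2a > 0, then |g(t,y) − g(x,y)| ≤ a/(4π·d·(d−a)) + k·a/(4π·d). -/

import Mathlib

noncomputable def greenFree (k : ℝ) (x y : EuclideanSpace ℝ (Fin 3)) : ℂ :=
  Complex.exp (Complex.I * (k * ‖x - y‖)) / (4 * Real.pi * ‖x - y‖)

lemma abs_exp_I_sub (s t : ℝ) :
    ‖Complex.exp (Complex.I * s) - Complex.exp (Complex.I * t)‖ ≤ |s - t| := by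
  have hderiv : ∀ θ ∈ (Set.univ : Set ℝ), HasDerivWithinAt (fun θ : ℝ => Complex.exp (Complex.I * θ))
      (Complex.exp (Complex.I * (θ : ℂ)) * Complex.I) Set.univ θ := by
    intro θ _
    have h1 : HasDerivAt (fun θ : ℝ => (Complex.I * θ : ℂ)) Complex.I θ := by
      simpa using ((Complex.ofRealCLM.hasDerivAt (x := θ)).const_mul Complex.I)
    simpa using h1.cexp
  have hbound : ∀ θ ∈ (Set.univ : Set ℝ), ‖Complex.exp (Complex.I * (θ : ℂ)) * Complex.I‖ ≤ 1 := by
    intro θ _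
    rw [norm_mul]
    simp [Complex.norm_exp]
  have := (convex_univ (𝕜 := ℝ)).norm_image_sub_le_of_norm_hasDerivWithin_le
    hderiv hbound (Set.mem_univ t) (Set.mem_univ s)
  simpa [Real.norm_eq_abs] using this

theorem green_diff_bound (k a d : ℝ) (hk : 0 ≤ k) (ha : 0 < a) (hd : 2 * a < d)
    (x y t : EuclideanSpace ℝ (Fin 3)) (ht : ‖t - x‖ ≤ a) (hxy : d ≤ ‖x - y‖) :
    ‖greenFree k t y - greenFree k x y‖ ≤
      a / (4 * Real.pi * d * (d - a)) + k * a / (4 * Real.pi * d) := by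
  set r1 : ℝ := ‖t - y‖ with hr1def
  set r2 : ℝ := ‖x - y‖ with hr2def
  have hπ : 0 < Real.pi := Real.pi_pos
  have hda : 0 < d - a := by linarith
  have hd0 : 0 < d := by linarith
  have hdiff : |r1 - r2| ≤ a := by
    have h := abs_norm_sub_norm_le (t - y) (x - y)
    have he : (t - y) - (x - y) = t - x := by abel
    rw [he] at h
    exact h.trans ht
  have hr2 : d ≤ r2 := hxy
  have hr1 : d - a ≤ r1 := by
    have := abs_le.mp hdiff
    linarith [this.1]
  have hr1pos : 0 < r1 := lt_of_lt_of_le hda hr1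
  have hr2pos : 0 < r2 := lt_of_lt_of_le hd0 hr2
  set e1 : ℂ := Complex.exp (Complex.I * ((k * r1 : ℝ) : ℂ)) with he1
  set e2 : ℂ := Complex.exp (Complex.I * ((k * r2 : ℝ) : ℂ)) with he2
  have hge : greenFree k t y - greenFree k x y =
      e1 * ((1 / (4 * Real.pi * r1) - 1 / (4 * Real.pi * r2) : ℝ) : ℂ)
        + (e1 - e2) * ((1 / (4 * Real.pi * r2) : ℝ) : ℂ) := by
    rw [greenFree, greenFree, he1, he2]
    push_cast
    field_simp
    ring
  rw [hge]
  refine (norm_add_le _ _).trans ?_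
  rw [norm_mul, norm_mul, Complex.norm_real, Complex.norm_real, Real.norm_eq_abs, Real.norm_eq_abs]
  have habse1 : ‖e1‖ = 1 := by
    rw [he1, Complex.norm_exp]
    simp
  have h1 : |1 / (4 * Real.pi * r1) - 1 / (4 * Real.pi * r2)| ≤
      a / (4 * Real.pi * d * (d - a)) := by
    have heq : 1 / (4 * Real.pi * r1) - 1 / (4 * Real.pi * r2)
        = (r2 - r1) / (4 * Real.pi * r1 * r2) := by
      field_simp
    have hpos : (0:ℝ) < 4 * Real.pi * r1 * r2 := by positivity
    rw [heq, abs_div, abs_of_pos hpos]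
    rw [div_le_div_iff₀ hpos (by positivity)]
    have hnum : |r2 - r1| ≤ a := by rwa [abs_sub_comm]
    have habs0 : 0 ≤ |r2 - r1| := abs_nonneg _
    nlinarith [mul_le_mul hnum (mul_le_mul hr1 hr2 hd0.le hr1pos.le) (by positivity : (0:ℝ) ≤ (d - a) * d) ha.le, hπ]
  have h2 : ‖e1 - e2‖ ≤ k * a := by
    have hle := abs_exp_I_sub (k * r1) (k * r2)
    refine hle.trans ?_
    rw [← mul_sub, abs_mul, abs_of_nonneg hk]
    exact mul_le_mul_of_nonneg_left hdiff hk
  have h3 : |1 / (4 * Real.pi * r2)| ≤ 1 / (4 * Real.pi * d) := by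
    rw [abs_of_pos (by positivity)]
    apply one_div_le_one_div_of_le (by positivity)
    nlinarith
  calc ‖e1‖ * |1 / (4 * Real.pi * r1) - 1 / (4 * Real.pi * r2)|
        + ‖e1 - e2‖ * |1 / (4 * Real.pi * r2)|
      ≤ 1 * (a / (4 * Real.pi * d * (d - a))) + (k * a) * (1 / (4 * Real.pi * d)) :=
        add_le_add (mul_le_mul habse1.le h1 (abs_nonneg _) zero_le_one)
          (mul_le_mul h2 h3 (abs_nonneg _) (by positivity))
    _ = a / (4 * Real.pi * d * (d - a)) + k * a / (4 * Real.pi * d) := by ring
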